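/- Let (A, ∫_A) and (T, ∫_T) be oriented graded Artinian Gorenstein algebras with a graded algebra map π : A → T and associated Gysin map ι : T(k−d) → A. Then π is surjective if and only if ι is injective. -/
import Mathlib

/-- An oriented graded Artinian Gorenstein algebra: a finite-dimensional graded
algebra with top (socle) degree `d`, equipped with an orientation `intg`
(a nonzero linear functional supported in degree `d`) whose associated
multiplication pairing is non-degenerate. -/
structure OrientedAG (F : Type) [Field F] {A : Type} [CommRing A] [Algebra F A]
    (𝒜 : ℕ → Submodule F A) (d : ℕ) : Type where
  fin : FiniteDimensional F A
  top_ne : 𝒜 d ≠ ⊥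
  top_vanish : ∀ i, d < i → 𝒜 i = ⊥
  intg : A →ₗ[F] F
  intg_supported : ∀ i, i ≠ d → ∀ a ∈ 𝒜 i, intg a = 0
  intg_ne : intg ≠ 0
  nondeg : ∀ a : A, a ≠ 0 → ∃ b : A, intg (a * b) ≠ 0


/-- Lemma: `π` is surjective iff the Gysin map `ι` is injective.
Here `ι : T(k-d) → A` is the Gysin map of `π`, characterized by
`∫_A (ι t · a) = ∫_T (t · π a)` for all `a ∈ A`, `t ∈ T`. -/
theorem surjective_iff_gysin_injective
    (F : Type) [Field F] {A T : Type} [CommRing A] [Algebra F A] [CommRing T] [Algebra F T]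
    (𝒜 : ℕ → Submodule F A) (𝒯 : ℕ → Submodule F T)
    [GradedAlgebra 𝒜] [GradedAlgebra 𝒯]
    {d k : ℕ} (hk : k ≤ d)
    (OA : OrientedAG F 𝒜 d) (OT : OrientedAG F 𝒯 k)
    (π : A →ₐ[F] T) (hπ : ∀ i, ∀ a ∈ 𝒜 i, π a ∈ 𝒯 i)
    (ι : T →ₗ[F] A)
    (hι : ∀ (t : T) (a : A), OA.intg (ι t * a) = OT.intg (t * π a)) :
    Function.Surjective π ↔ Function.Injective ι := by
  haveI := OT.fin
  constructor
  · intro hsurj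
    rw [injective_iff_map_eq_zero]
    intro t ht
    by_contra h0
    obtain ⟨s, hs⟩ := OT.nondeg t h0
    obtain ⟨a, rfl⟩ := hsurj s
    apply hs
    rw [← hι, ht, zero_mul, map_zero]
  · intro hinj
    -- consider the map B : T → Dual T, t ↦ (s ↦ ∫ (t * s))
    set B : T →ₗ[F] Module.Dual F T :=
      { toFun := fun t => OT.intg ∘ₗ (LinearMap.mul F T t)
        map_add' := by
          intro x y; ext s
          simp [mul_add, add_mul]
        map_smul' := by
          intro c x; ext s
          simp [smul_mul_assoc] } with hB
    have hBinj : Function.Injective B := by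
      rw [← LinearMap.ker_eq_bot]
      rw [LinearMap.ker_eq_bot']
      intro t ht
      by_contra h0
      obtain ⟨s, hs⟩ := OT.nondeg t h0
      apply hs
      have := congrArg (fun f => f s) ht
      simpa [hB] using this
    have hBsurj : Function.Surjective B :=
      (LinearMap.injective_iff_surjective_of_finrank_eq_finrank
        (Subspace.dual_finrank_eq (K := F) (V := T)).symm).mp hBinj
    intro s
    by_contra hs
    -- range π is a proper submodule; find a nonzero functional vanishing on it
    have hlt : LinearMap.range π.toLinearMap < ⊤ := by
      rw [lt_top_iff_ne_top]
      intro htop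
      exact hs (htop ▸ Submodule.mem_top : s ∈ LinearMap.range π.toLinearMap)
    obtain ⟨f, hf0, hfvan⟩ : ∃ f : Module.Dual F T, f ≠ 0 ∧
        ∀ a : A, f (π a) = 0 := by
      obtain ⟨f, hf⟩ := Submodule.exists_dual_map_eq_bot_of_lt_top hlt inferInstance
      refine ⟨f, hf.1, fun a => ?_⟩
      have : f (π a) ∈ Submodule.map f (LinearMap.range π.toLinearMap) :=
        ⟨π a, ⟨a, rfl⟩, rfl⟩
      rw [hf.2] at this
      simpa using this
    obtain ⟨t, ht⟩ := hBsurj f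
    have ht0 : t ≠ 0 := by
      rintro rfl
      apply hf0
      rw [← ht]
      simp [hB]
    have : ι t = 0 := by
      by_contra hι0
      obtain ⟨b, hb⟩ := OA.nondeg (ι t) hι0
      apply hb
      rw [hι]
      have h2 := congrArg (fun g => g (π b)) ht
      simp only [hB, LinearMap.coe_mk, AddHom.coe_mk, LinearMap.coe_comp,
        Function.comp_apply, LinearMap.mul_apply'] at h2
      rw [h2, hfvan]
    exact ht0 (hinj (by simpa using this))
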